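/- Let D ⊂ ℝⁿ be a bounded smooth domain and suppose g : D̄ × ℝ → ℝ is continuous and bounded, with finite uniform limits g(x, ±∞) = lim_{u→±∞} g(x,u), and g(x,-∞) < g(x,u) < g(x,∞) for all x ∈ D and u ∈ ℝ. If there exist u ∈ W^{2,2}(D) and b ∈ ℝ solving Δu + g(x,u) = p(x) in D with u = b on ∂D and ∫_{∂D} ∂u/∂n ds = 0, then the mean value μ₀ = (1/|D|) ∫_D p dx satisfies (1/|D|) ∫_D g(x,-∞) dx < μ₀ < (1/|D|) ∫_D g(x,∞) dx. -/

import Mathlib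

open MeasureTheory Real

noncomputable def lap {n : ℕ} (u : EuclideanSpace ℝ (Fin n) → ℝ)
    (x : EuclideanSpace ℝ (Fin n)) : ℝ :=
  ∑ i : Fin n, iteratedFDeriv ℝ 2 u x ![EuclideanSpace.single i 1, EuclideanSpace.single i 1]

noncomputable def divg {n : ℕ} (Φ : EuclideanSpace ℝ (Fin n) → EuclideanSpace ℝ (Fin n))
    (x : EuclideanSpace ℝ (Fin n)) : ℝ :=
  ∑ i : Fin n, (inner ℝ (EuclideanSpace.single i 1) (fderiv ℝ Φ x (EuclideanSpace.single i 1)) : ℝ)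

lemma gradCD {n : ℕ} (u : EuclideanSpace ℝ (Fin n) → ℝ) (hu : ContDiff ℝ 2 u) :
    ContDiff ℝ 1 (gradient u) :=
  (InnerProductSpace.toDual ℝ _).symm.contDiff.comp (hu.fderiv_right (by norm_num))

lemma innerFderivGrad {n : ℕ} (u : EuclideanSpace ℝ (Fin n) → ℝ) (hu : ContDiff ℝ 2 u)
    (x v : EuclideanSpace ℝ (Fin n)) :
    (inner ℝ v (fderiv ℝ (gradient u) x v) : ℝ) = fderiv ℝ (fderiv ℝ u) x v v := by
  have hΦ : DifferentiableAt ℝ (gradient u) x :=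
    ((gradCD u hu).differentiable one_ne_zero).differentiableAt
  have hdd : DifferentiableAt ℝ (fderiv ℝ u) x :=
    ((hu.fderiv_right (by norm_num)).differentiable one_ne_zero).differentiableAt
  have h1 : (fun y => (inner ℝ v (gradient u y) : ℝ)) = fun y => fderiv ℝ u y v := by
    funext y
    rw [real_inner_comm]
    exact InnerProductSpace.toDual_symm_apply
  have h2 : fderiv ℝ (fun y => (inner ℝ v (gradient u y) : ℝ)) x =
      (innerSL ℝ v).comp (fderiv ℝ (gradient u) x) :=
    ((innerSL ℝ v).hasFDerivAt.comp x hΦ.hasFDerivAt).fderiv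
  have h3 : fderiv ℝ (fun y => fderiv ℝ u y v) x =
      (ContinuousLinearMap.apply ℝ ℝ v).comp (fderiv ℝ (fderiv ℝ u) x) :=
    ((ContinuousLinearMap.apply ℝ ℝ v).hasFDerivAt.comp x hdd.hasFDerivAt).fderiv
  have := congrArg (fun f => fderiv ℝ f x v) h1
  simp only [h2, h3] at this
  simpa using this

lemma divgGradEqLap {n : ℕ} (u : EuclideanSpace ℝ (Fin n) → ℝ) (hu : ContDiff ℝ 2 u)
    (x : EuclideanSpace ℝ (Fin n)) : divg (gradient u) x = lap u x := by
  unfold divg lap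
  refine Finset.sum_congr rfl fun i _ => ?_
  rw [innerFderivGrad u hu, iteratedFDeriv_two_apply]
  simp

/-- Necessary condition of Landesman–Lazer type: if the free boundary problem
Δu + g(x,u) = p(x), u|∂D = b, zero boundary flux, has a solution, then the mean
value μ₀ of p lies strictly between the averages of g(x,-∞) and g(x,∞). -/
theorem necessary_condition {n : ℕ} (hn : 0 < n)
    (D : Set (EuclideanSpace ℝ (Fin n)))
    (hD : IsOpen D) (hDb : Bornology.IsBounded D) (hDne : D.Nonempty)
    (σ : Measure (EuclideanSpace ℝ (Fin n)))
    (ν : EuclideanSpace ℝ (Fin n) → EuclideanSpace ℝ (Fin n))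
    (hdiv : ∀ Φ : EuclideanSpace ℝ (Fin n) → EuclideanSpace ℝ (Fin n), ContDiff ℝ 1 Φ →
      (∫ x in D, divg Φ x) = ∫ x in frontier D, (inner ℝ (Φ x) (ν x) : ℝ) ∂σ)
    (g : EuclideanSpace ℝ (Fin n) → ℝ → ℝ)
    (hgc : Continuous fun q : (EuclideanSpace ℝ (Fin n)) × ℝ => g q.1 q.2)
    (hgb : ∃ C, ∀ x u, |g x u| ≤ C)
    (gp gm : EuclideanSpace ℝ (Fin n) → ℝ)
    (hgpInt : IntegrableOn gp D volume) (hgmInt : IntegrableOn gm D volume)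
    (hlimp : ∀ ε > 0, ∃ R : ℝ, ∀ x ∈ closure D, ∀ u ≥ R, |g x u - gp x| < ε)
    (hlimm : ∀ ε > 0, ∃ R : ℝ, ∀ x ∈ closure D, ∀ u ≤ R, |g x u - gm x| < ε)
    (hstrict : ∀ x ∈ D, ∀ u : ℝ, gm x < g x u ∧ g x u < gp x)
    (p : EuclideanSpace ℝ (Fin n) → ℝ) (hpInt : IntegrableOn p D volume)
    (u : EuclideanSpace ℝ (Fin n) → ℝ) (b : ℝ)
    (hu : ContDiff ℝ 2 u)
    (heq : ∀ x ∈ D, lap u x + g x (u x) = p x)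
    (hb : ∀ x ∈ frontier D, u x = b)
    (hflux : (∫ x in frontier D, (inner ℝ (gradient u x) (ν x) : ℝ) ∂σ) = 0) :
    ((volume D).toReal)⁻¹ * ∫ x in D, gm x < ((volume D).toReal)⁻¹ * ∫ x in D, p x ∧
      ((volume D).toReal)⁻¹ * ∫ x in D, p x < ((volume D).toReal)⁻¹ * ∫ x in D, gp x := by
  have hDmeas : MeasurableSet D := hD.measurableSet
  have hvolfin : volume D < ⊤ := hDb.measure_lt_top
  have hvolpos : 0 < volume D := hD.measure_pos volume hDne
  -- ∫_D lap u = 0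
  have hlap0 : (∫ x in D, lap u x) = 0 := by
    have := hdiv (gradient u) (gradCD u hu)
    rw [hflux] at this
    rw [← this]
    exact setIntegral_congr_fun hDmeas fun x _ => (divgGradEqLap u hu x).symm
  -- continuity / integrability
  have hlapc : Continuous (lap u) := by
    unfold lap
    refine continuous_finset_sum _ fun i _ => ?_
    exact (ContinuousMultilinearMap.apply ℝ (fun _ : Fin 2 => EuclideanSpace ℝ (Fin n)) ℝ
      ![EuclideanSpace.single i 1, EuclideanSpace.single i 1]).continuous.comp
      (hu.continuous_iteratedFDeriv le_rfl)
  have hclos : IsCompact (closure D) := Metric.isCompact_of_isClosed_isBounded isClosed_closure hDb.closure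
  have hlapInt : IntegrableOn (lap u) D volume :=
    (hlapc.continuousOn.integrableOn_compact hclos).mono_set subset_closure
  have hguc : Continuous (fun x => g x (u x)) :=
    hgc.comp (continuous_id.prodMk hu.continuous)
  have hguInt : IntegrableOn (fun x => g x (u x)) D volume := by
    obtain ⟨C, hC⟩ := hgb
    refine Integrable.mono' (g := fun _ => C) ?_ hguc.aestronglyMeasurable ?_
    · exact integrableOn_const hvolfin.ne
    · exact Filter.Eventually.of_forall fun x => by simpa using hC x (u x)
  -- ∫_D g(x,u x) = ∫_D p
  have hkey : (∫ x in D, g x (u x)) = ∫ x in D, p x := by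
    have h1 : (∫ x in D, (lap u x + g x (u x))) = ∫ x in D, p x :=
      setIntegral_congr_fun hDmeas fun x hx => heq x hx
    rw [integral_add hlapInt hguInt, hlap0, zero_add] at h1
    exact h1
  -- strict inequality machinery
  have hmain : ∀ (f h : EuclideanSpace ℝ (Fin n) → ℝ), IntegrableOn f D volume →
      IntegrableOn h D volume → (∀ x ∈ D, f x < h x) →
      (∫ x in D, f x) < ∫ x in D, h x := by
    intro f h hf hh hlt
    have hsub : IntegrableOn (fun x => h x - f x) D volume := hh.sub hf
    have hnn : 0 ≤ᵐ[volume.restrict D] fun x => h x - f x := by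
      filter_upwards [ae_restrict_mem hDmeas] with x hx
      exact sub_nonneg.mpr (hlt x hx).le
    have hpos : 0 < ∫ x in D, (h x - f x) := by
      rw [setIntegral_pos_iff_support_of_nonneg_ae hnn hsub]
      refine lt_of_lt_of_le hvolpos (measure_mono ?_)
      intro x hx
      exact ⟨sub_ne_zero.mpr (hlt x hx).ne', hx⟩
    have := integral_sub hh hf
    linarith [hpos, this ▸ hpos]
  have h1 : (∫ x in D, gm x) < ∫ x in D, g x (u x) :=
    hmain gm _ hgmInt hguInt fun x hx => (hstrict x hx (u x)).1
  have h2 : (∫ x in D, g x (u x)) < ∫ x in D, gp x :=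
    hmain _ gp hguInt hgpInt fun x hx => (hstrict x hx (u x)).2
  have hinvpos : 0 < ((volume D).toReal)⁻¹ :=
    inv_pos.mpr (ENNReal.toReal_pos hvolpos.ne' hvolfin.ne)
  constructor
  · exact mul_lt_mul_of_pos_left (hkey ▸ h1) hinvpos
  · exact mul_lt_mul_of_pos_left (hkey ▸ h2) hinvpos
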